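/- Let n ≥ 1 and k ≥ 1, and let A_1, …, A_k ⊆ ℝⁿ be measurable sets. Then the function ρ ↦ Σ_{i=1}^k ∫_{ℝⁿ} 1_{A_i} T_ρ 1_{A_i} dγ_n is differentiable at ρ = 0, and its derivative at ρ = 0 equals Σ_{i=1}^k ‖∫_{A_i} x dγ_n(x)‖²_{ℓ²}. -/

import Mathlib

open MeasureTheory Real
open scoped RealInnerProductSpace ENNReal NNReal

/-- The standard Gaussian probability measure `γₙ` on `ℝⁿ`. -/
noncomputable def gauss (n : ℕ) : Measure (EuclideanSpace ℝ (Fin n)) :=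
  volume.withDensity
    (fun y => ENNReal.ofReal ((2 * Real.pi) ^ (-(n : ℝ) / 2) * Real.exp (-‖y‖ ^ 2 / 2)))

/-- The Ornstein-Uhlenbeck (noise) operator `T_ρ`. -/
noncomputable def OU (n : ℕ) (ρ : ℝ) (f : EuclideanSpace ℝ (Fin n) → ℝ)
    (x : EuclideanSpace ℝ (Fin n)) : ℝ :=
  ∫ y, f (ρ • x + Real.sqrt (1 - ρ ^ 2) • y) ∂(gauss n)


variable {n : ℕ}

noncomputable def w (n : ℕ) (x : EuclideanSpace ℝ (Fin n)) : ℝ :=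
  (2 * Real.pi) ^ (-(n:ℝ)/2) * Real.exp (-‖x‖^2/2)

lemma w_pos (x : EuclideanSpace ℝ (Fin n)) : 0 < w n x := by
  have : (0:ℝ) < 2 * Real.pi := by positivity
  exact mul_pos (Real.rpow_pos_of_pos this _) (Real.exp_pos _)

lemma w_cont : Continuous (w n) := by
  unfold w; fun_prop

lemma w_meas : Measurable fun y => ((w n y).toNNReal : ℝ≥0) :=
  (w_cont.measurable).real_toNNReal

lemma gauss_eq : gauss n = volume.withDensity (fun y => ((w n y).toNNReal : ℝ≥0∞)) := rfl

variable {V : Type*} [NormedAddCommGroup V] [NormedSpace ℝ V]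

lemma integral_gauss (f : EuclideanSpace ℝ (Fin n) → V) :
    ∫ x, f x ∂(gauss n) = ∫ x, w n x • f x := by
  rw [gauss_eq, integral_withDensity_eq_integral_smul w_meas f]
  congr 1; ext x; rw [NNReal.smul_def, Real.coe_toNNReal _ (w_pos x).le]

lemma setIntegral_gauss (f : EuclideanSpace ℝ (Fin n) → V) {A : Set (EuclideanSpace ℝ (Fin n))}
    (hA : MeasurableSet A) :
    ∫ x in A, f x ∂(gauss n) = ∫ x in A, w n x • f x := by
  rw [gauss_eq, restrict_withDensity hA,
    integral_withDensity_eq_integral_smul w_meas f]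
  congr 1; ext x; rw [NNReal.smul_def, Real.coe_toNNReal _ (w_pos x).le]


noncomputable def ind (A : Set (EuclideanSpace ℝ (Fin n))) (x : EuclideanSpace ℝ (Fin n)) : ℝ :=
  A.indicator 1 x

noncomputable def Ind (A : Set (EuclideanSpace ℝ (Fin n)))
    (p : EuclideanSpace ℝ (Fin n) × EuclideanSpace ℝ (Fin n)) : ℝ := ind A p.1 * ind A p.2

noncomputable def Aq (p : EuclideanSpace ℝ (Fin n) × EuclideanSpace ℝ (Fin n)) : ℝ :=
  ‖p.1‖^2 + ‖p.2‖^2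

noncomputable def Bq (p : EuclideanSpace ℝ (Fin n) × EuclideanSpace ℝ (Fin n)) : ℝ :=
  @inner ℝ _ _ p.1 p.2

lemma ind_nonneg {A : Set (EuclideanSpace ℝ (Fin n))} (x) : 0 ≤ ind A x := by
  unfold ind; by_cases h : x ∈ A <;> simp [Set.indicator_apply, h]

lemma ind_le_one {A : Set (EuclideanSpace ℝ (Fin n))} (x) : ind A x ≤ 1 := by
  unfold ind; by_cases h : x ∈ A <;> simp [Set.indicator_apply, h]

lemma Ind_nonneg {A : Set (EuclideanSpace ℝ (Fin n))} (p) : 0 ≤ Ind A p :=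
  mul_nonneg (ind_nonneg _) (ind_nonneg _)

lemma Ind_le_one {A : Set (EuclideanSpace ℝ (Fin n))} (p) : Ind A p ≤ 1 :=
  mul_le_one₀ (ind_le_one _) (ind_nonneg _) (ind_le_one _)

lemma Aq_nonneg (p : EuclideanSpace ℝ (Fin n) × EuclideanSpace ℝ (Fin n)) : 0 ≤ Aq p := by
  unfold Aq; positivity

lemma abs_Bq_le (p : EuclideanSpace ℝ (Fin n) × EuclideanSpace ℝ (Fin n)) : |Bq p| ≤ Aq p / 2 := by
  have h := abs_real_inner_le_norm p.1 p.2
  unfold Bq Aq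
  nlinarith [sq_nonneg (‖p.1‖ - ‖p.2‖)]

lemma exp_bound_aux {ρ : ℝ} (hρ : |ρ| ≤ 1/2)
    (p : EuclideanSpace ℝ (Fin n) × EuclideanSpace ℝ (Fin n)) :
    (2*Bq p*ρ - Aq p)/(2*(1-ρ^2)) ≤ -Aq p/4 := by
  have hρ2 : ρ^2 ≤ 1/4 := by nlinarith [sq_abs ρ, abs_nonneg ρ]
  have ht1 : (3/4:ℝ) ≤ 1 - ρ^2 := by linarith
  have ht2 : 1 - ρ^2 ≤ 1 := by nlinarith [sq_nonneg ρ]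
  have ha := Aq_nonneg p
  have hB := abs_Bq_le p
  have habs : 2*Bq p*ρ ≤ 2*(|Bq p| * |ρ|) := by
    calc 2*Bq p*ρ ≤ |2*Bq p*ρ| := le_abs_self _
    _ = 2*(|Bq p| * |ρ|) := by rw [abs_mul, abs_mul]; norm_num; ring
  rw [div_le_iff₀ (by linarith)]
  nlinarith [mul_nonneg (abs_nonneg (Bq p)) (abs_nonneg ρ),
    mul_le_mul hB hρ (abs_nonneg ρ) (by linarith [ha] : (0:ℝ) ≤ Aq p / 2)]

noncomputable def Fk (n : ℕ) (A : Set (EuclideanSpace ℝ (Fin n))) (ρ : ℝ)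
    (p : EuclideanSpace ℝ (Fin n) × EuclideanSpace ℝ (Fin n)) : ℝ :=
  (Ind A p * (2*π) ^ (-(n:ℝ))) *
    ((1 - ρ^2) ^ (-(n:ℝ)/2) * Real.exp ((2*Bq p*ρ - Aq p)/(2*(1-ρ^2))))

noncomputable def Fk' (n : ℕ) (A : Set (EuclideanSpace ℝ (Fin n))) (ρ : ℝ)
    (p : EuclideanSpace ℝ (Fin n) × EuclideanSpace ℝ (Fin n)) : ℝ :=
  (Ind A p * (2*π) ^ (-(n:ℝ))) *
    ((-(2*ρ) * (-(n:ℝ)/2) * (1-ρ^2) ^ (-(n:ℝ)/2 - 1)) * Real.exp ((2*Bq p*ρ - Aq p)/(2*(1-ρ^2))) +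
     (1-ρ^2) ^ (-(n:ℝ)/2) *
       (Real.exp ((2*Bq p*ρ - Aq p)/(2*(1-ρ^2))) *
         ((2*Bq p * (2*(1-ρ^2)) - (2*Bq p*ρ - Aq p) * (2 * -(2*ρ))) / (2*(1-ρ^2))^2)))

lemma rpow_aux {n : ℕ} {t : ℝ} (h1 : 3/4 ≤ t) (h2 : t ≤ 1) {e : ℝ}
    (he : -((n:ℝ)+1) ≤ e) : t ^ e ≤ 2^(n+1) := by
  have h0 : (0:ℝ) < t := by linarith
  have c1 : t ^ e ≤ t ^ (-((n:ℝ)+1)) := Real.rpow_le_rpow_of_exponent_ge h0 h2 he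
  have c2 : t ^ (-((n:ℝ)+1)) = (t ^ (n+1 : ℕ))⁻¹ := by
    rw [show -((n:ℝ)+1) = -(((n+1 : ℕ)):ℝ) by push_cast; ring, Real.rpow_neg h0.le,
      Real.rpow_natCast]
  have c3 : (t ^ (n+1 : ℕ))⁻¹ ≤ ((1/2:ℝ)^(n+1))⁻¹ := by
    apply inv_anti₀ (by positivity)
    exact pow_le_pow_left₀ (by norm_num) (by linarith) _
  have c4 : ((1/2:ℝ)^(n+1))⁻¹ = 2^(n+1) := by
    rw [one_div, inv_pow, inv_inv]
  linarith [c2 ▸ c1, c4 ▸ c3]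

noncomputable def boundF (n : ℕ)
    (p : EuclideanSpace ℝ (Fin n) × EuclideanSpace ℝ (Fin n)) : ℝ :=
  (2*π) ^ (-(n:ℝ)) * 2^(n+1) * (((n:ℝ)/2 + 3*Aq p) * Real.exp (-Aq p/4))

lemma t_facts {ρ : ℝ} (hρ : |ρ| ≤ 1/2) : 3/4 ≤ 1 - ρ^2 ∧ 1 - ρ^2 ≤ 1 := by
  constructor
  · nlinarith [sq_abs ρ, abs_nonneg ρ]
  · nlinarith [sq_nonneg ρ]

lemma abs_Fk'_le {A : Set (EuclideanSpace ℝ (Fin n))} {ρ : ℝ} (hρ : |ρ| ≤ 1/2)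
    (p : EuclideanSpace ℝ (Fin n) × EuclideanSpace ℝ (Fin n)) :
    |Fk' n A ρ p| ≤ boundF n p := by
  obtain ⟨ht1, ht2⟩ := t_facts hρ
  have ht0 : (0:ℝ) < 1 - ρ^2 := by linarith
  have ha := Aq_nonneg p
  have hB := abs_Bq_le p
  set t := 1 - ρ^2 with htdef
  set a := Aq p
  set B := Bq p
  set E0 := Real.exp (-a/4) with hE0
  have hexp : Real.exp ((2*B*ρ - a)/(2*t)) ≤ E0 := by
    rw [hE0]
    exact Real.exp_le_exp.2 (exp_bound_aux hρ p)
  have hexp0 : (0:ℝ) < Real.exp ((2*B*ρ - a)/(2*t)) := Real.exp_pos _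
  have hq1 : t ^ (-(n:ℝ)/2 - 1) ≤ 2^(n+1) := by
    apply rpow_aux ht1 ht2
    have : (0:ℝ) ≤ (n:ℝ) := Nat.cast_nonneg n
    linarith
  have hq2 : t ^ (-(n:ℝ)/2) ≤ 2^(n+1) := by
    apply rpow_aux ht1 ht2
    have : (0:ℝ) ≤ (n:ℝ) := Nat.cast_nonneg n
    linarith
  have hrpow1 : (0:ℝ) ≤ t ^ (-(n:ℝ)/2 - 1) := Real.rpow_nonneg ht0.le _
  have hrpow2 : (0:ℝ) ≤ t ^ (-(n:ℝ)/2) := Real.rpow_nonneg ht0.le _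
  -- bound the quotient term
  have hquot : |(2*B * (2*t) - (2*B*ρ - a) * (2 * -(2*ρ))) / (2*t)^2| ≤ 3*a := by
    rw [abs_div, div_le_iff₀ (by positivity)]
    have e1 : |2*B*(2*t)| ≤ 2*a := by
      rw [abs_mul, abs_mul]
      rw [abs_of_pos (by linarith : (0:ℝ) < 2*t)]
      have : |(2:ℝ)| = 2 := by norm_num
      rw [this]
      nlinarith [abs_nonneg B]
    have e2 : |(2*B*ρ - a) * (2 * -(2*ρ))| ≤ 3*a := by
      rw [abs_mul]
      have f1 : |2*B*ρ - a| ≤ 3/2 * a := by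
        have : |2*B*ρ| ≤ a/2 := by
          rw [abs_mul, abs_mul]
          have : |(2:ℝ)| = 2 := by norm_num
          rw [this]
          nlinarith [abs_nonneg B, abs_nonneg ρ,
            mul_le_mul hB hρ (abs_nonneg ρ) (by linarith : (0:ℝ) ≤ a/2)]
        calc |2*B*ρ - a| ≤ |2*B*ρ| + |a| := abs_sub _ _
        _ ≤ a/2 + a := by rw [abs_of_nonneg ha]; linarith
        _ = 3/2 * a := by ring
      have f2 : |2 * -(2*ρ)| ≤ 2 := by
        rw [abs_mul, abs_neg, abs_mul]
        have h2 : |(2:ℝ)| = 2 := by norm_num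
        rw [h2]
        linarith
      calc |2*B*ρ - a| * |2 * -(2*ρ)| ≤ (3/2*a) * 2 :=
        mul_le_mul f1 f2 (abs_nonneg _) (by linarith)
      _ = 3*a := by ring
    have habs : |(2*B * (2*t) - (2*B*ρ - a) * (2 * -(2*ρ)))| ≤ 5*a := by
      calc |(2*B * (2*t) - (2*B*ρ - a) * (2 * -(2*ρ)))|
          ≤ |2*B*(2*t)| + |(2*B*ρ - a) * (2 * -(2*ρ))| := abs_sub _ _
      _ ≤ 2*a + 3*a := add_le_add e1 e2
      _ = 5*a := by ring
    have hsq : (9/4:ℝ) ≤ |(2*t)^2| := by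
      rw [abs_of_nonneg (by positivity)]
      nlinarith
    nlinarith [habs, hsq, abs_nonneg ((2*B * (2*t) - (2*B*ρ - a) * (2 * -(2*ρ))))]
  -- assemble
  unfold Fk'
  rw [abs_mul]
  have hIC : |Ind A p * (2*π) ^ (-(n:ℝ))| ≤ (2*π) ^ (-(n:ℝ)) := by
    rw [abs_mul, abs_of_nonneg (Ind_nonneg p),
      abs_of_nonneg (Real.rpow_nonneg (by positivity) _)]
    nlinarith [Ind_le_one (A := A) p, Real.rpow_nonneg (show (0:ℝ) ≤ 2*π by positivity) (-(n:ℝ))]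
  have hT1 : |(-(2*ρ) * (-(n:ℝ)/2) * t ^ (-(n:ℝ)/2 - 1)) * Real.exp ((2*B*ρ - a)/(2*t))|
      ≤ 1 * ((n:ℝ)/2) * 2^(n+1) * E0 := by
    rw [abs_mul, abs_mul, abs_mul]
    have g1 : |(-(2*ρ))| ≤ 1 := by rw [abs_neg, abs_mul]; norm_num; linarith
    have g2 : |(-(n:ℝ)/2)| = (n:ℝ)/2 := by
      rw [abs_div, abs_neg, abs_of_nonneg (Nat.cast_nonneg n : (0:ℝ) ≤ n)]; norm_num
    rw [g2, abs_of_nonneg hrpow1, abs_of_pos hexp0]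
    gcongr <;> first | exact g1 | exact hq1 | exact hexp | positivity
  have hT2 : |t ^ (-(n:ℝ)/2) * (Real.exp ((2*B*ρ - a)/(2*t)) *
        ((2*B * (2*t) - (2*B*ρ - a) * (2 * -(2*ρ))) / (2*t)^2))|
      ≤ 2^(n+1) * (E0 * (3*a)) := by
    rw [abs_mul, abs_mul, abs_of_nonneg hrpow2, abs_of_pos hexp0]
    gcongr <;> first | exact hq2 | exact hexp | exact hquot | positivity
  calc |Ind A p * (2*π) ^ (-(n:ℝ))| *
      |(-(2*ρ) * (-(n:ℝ)/2) * t ^ (-(n:ℝ)/2 - 1)) * Real.exp ((2*B*ρ - a)/(2*t)) +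
        t ^ (-(n:ℝ)/2) * (Real.exp ((2*B*ρ - a)/(2*t)) *
          ((2*B * (2*t) - (2*B*ρ - a) * (2 * -(2*ρ))) / (2*t)^2))|
      ≤ (2*π) ^ (-(n:ℝ)) * (1 * ((n:ℝ)/2) * 2^(n+1) * E0 + 2^(n+1) * (E0 * (3*a))) := by
        apply mul_le_mul hIC _ (abs_nonneg _) (Real.rpow_nonneg (by positivity) _)
        exact (abs_add_le _ _).trans (add_le_add hT1 hT2)
  _ = boundF n p := by
    unfold boundF
    rw [hE0]
    ring


lemma abs_Fk_le {A : Set (EuclideanSpace ℝ (Fin n))} {ρ : ℝ} (hρ : |ρ| ≤ 1/2)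
    (p : EuclideanSpace ℝ (Fin n) × EuclideanSpace ℝ (Fin n)) :
    |Fk n A ρ p| ≤ (2*π) ^ (-(n:ℝ)) * (2^(n+1) * Real.exp (-Aq p/4)) := by
  obtain ⟨ht1, ht2⟩ := t_facts hρ
  have ht0 : (0:ℝ) < 1 - ρ^2 := by linarith
  have hq2 : (1-ρ^2) ^ (-(n:ℝ)/2) ≤ 2^(n+1) := by
    apply rpow_aux ht1 ht2
    have : (0:ℝ) ≤ (n:ℝ) := Nat.cast_nonneg n
    linarith
  have hexp : Real.exp ((2*Bq p*ρ - Aq p)/(2*(1-ρ^2))) ≤ Real.exp (-Aq p/4) :=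
    Real.exp_le_exp.2 (exp_bound_aux hρ p)
  have hIC : |Ind A p * (2*π) ^ (-(n:ℝ))| ≤ (2*π) ^ (-(n:ℝ)) := by
    rw [abs_mul, abs_of_nonneg (Ind_nonneg p),
      abs_of_nonneg (Real.rpow_nonneg (by positivity) _)]
    nlinarith [Ind_le_one (A := A) p, Real.rpow_nonneg (show (0:ℝ) ≤ 2*π by positivity) (-(n:ℝ))]
  unfold Fk
  rw [abs_mul]
  apply mul_le_mul hIC _ (abs_nonneg _) (Real.rpow_nonneg (by positivity) _)
  rw [abs_mul, abs_of_nonneg (Real.rpow_nonneg ht0.le _), abs_of_pos (Real.exp_pos _)]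
  gcongr

lemma integrable_gaussE {b : ℝ} (hb : 0 < b) :
    Integrable (fun x : EuclideanSpace ℝ (Fin n) => Real.exp (-b * ‖x‖^2)) := by
  have h := (GaussianFourier.integrable_cexp_neg_mul_sq_norm_add (V := EuclideanSpace ℝ (Fin n))
    (b := (b:ℂ)) (by simpa using hb) 0 0).norm
  simpa [Complex.norm_exp, ← Complex.ofReal_pow] using h

lemma integrable_expAq {b : ℝ} (hb : 0 < b) :
    Integrable (fun p : EuclideanSpace ℝ (Fin n) × EuclideanSpace ℝ (Fin n) =>
      Real.exp (-b * Aq p)) (volume.prod volume) := by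
  have h := (integrable_gaussE (n := n) hb).mul_prod (integrable_gaussE (n := n) hb)
  apply h.congr
  filter_upwards with p
  unfold Aq
  rw [← Real.exp_add]
  ring_nf

lemma cont_Aq : Continuous (Aq (n := n)) := by
  unfold Aq; fun_prop

lemma cont_Bq : Continuous (Bq (n := n)) := by
  unfold Bq; exact continuous_inner

lemma integrable_boundF : Integrable (boundF n) (volume.prod volume) := by
  have key : ∀ p : EuclideanSpace ℝ (Fin n) × EuclideanSpace ℝ (Fin n),
      ‖boundF n p‖ ≤ (2*π) ^ (-(n:ℝ)) * 2^(n+1) * ((n:ℝ)/2 + 24) * Real.exp (-(1/8) * Aq p) := by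
    intro p
    have ha := Aq_nonneg p
    have h1 : 3 * Aq p * Real.exp (-(Aq p)/8) ≤ 24 := by
      have := Real.add_one_le_exp (Aq p / 8)
      have h2 : Aq p ≤ 8 * Real.exp (Aq p / 8) := by nlinarith [Real.exp_pos (Aq p / 8)]
      have h3 : Real.exp (-(Aq p)/8) = (Real.exp (Aq p/8))⁻¹ := by
        rw [← Real.exp_neg]; ring_nf
      rw [h3]
      rw [mul_inv_le_iff₀ (Real.exp_pos _)]
      linarith
    have hsplit : Real.exp (-Aq p/4) = Real.exp (-(Aq p)/8) * Real.exp (-(1/8) * Aq p) := by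
      rw [← Real.exp_add]; ring_nf
    rw [Real.norm_eq_abs, abs_of_nonneg]
    · unfold boundF
      rw [hsplit]
      have hc : (0:ℝ) ≤ (2*π) ^ (-(n:ℝ)) * 2^(n+1) := by positivity
      have hexp8 : (0:ℝ) < Real.exp (-(1/8) * Aq p) := Real.exp_pos _
      have hexp8' : Real.exp (-(Aq p)/8) ≤ 1 := Real.exp_le_one_iff.2 (by linarith)
      have : ((n:ℝ)/2 + 3*Aq p) * (Real.exp (-(Aq p)/8) * Real.exp (-(1/8) * Aq p))
          ≤ ((n:ℝ)/2 + 24) * Real.exp (-(1/8) * Aq p) := by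
        have e1 : ((n:ℝ)/2 + 3*Aq p) * Real.exp (-(Aq p)/8) ≤ (n:ℝ)/2 + 24 := by
          have := Real.exp_pos (-(Aq p)/8)
          nlinarith [Nat.cast_nonneg (α := ℝ) n]
        calc ((n:ℝ)/2 + 3*Aq p) * (Real.exp (-(Aq p)/8) * Real.exp (-(1/8) * Aq p))
            = (((n:ℝ)/2 + 3*Aq p) * Real.exp (-(Aq p)/8)) * Real.exp (-(1/8) * Aq p) := by ring
        _ ≤ ((n:ℝ)/2 + 24) * Real.exp (-(1/8) * Aq p) :=
          mul_le_mul_of_nonneg_right e1 hexp8.le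
      calc (2*π) ^ (-(n:ℝ)) * 2^(n+1) * (((n:ℝ)/2 + 3*Aq p) *
            (Real.exp (-(Aq p)/8) * Real.exp (-(1/8) * Aq p)))
          ≤ (2*π) ^ (-(n:ℝ)) * 2^(n+1) * (((n:ℝ)/2 + 24) * Real.exp (-(1/8) * Aq p)) :=
            mul_le_mul_of_nonneg_left this hc
      _ = (2*π) ^ (-(n:ℝ)) * 2^(n+1) * ((n:ℝ)/2 + 24) * Real.exp (-(1/8) * Aq p) := by ring
    · unfold boundF
      positivity
  apply Integrable.mono' (((integrable_expAq (n := n) (by norm_num : (0:ℝ) < 1/8)).const_mul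
    ((2*π) ^ (-(n:ℝ)) * 2^(n+1) * ((n:ℝ)/2 + 24))))
  · apply Continuous.aestronglyMeasurable
    unfold boundF
    have := cont_Aq (n := n)
    fun_prop
  · filter_upwards with p using key p

lemma one_sub_sq_pos {ρ : ℝ} (hρ : |ρ| < 1) : 0 < 1 - ρ^2 := by
  nlinarith [abs_nonneg ρ, sq_abs ρ, abs_lt.1 hρ]

lemma hasDerivAt_Fk {A : Set (EuclideanSpace ℝ (Fin n))} {ρ : ℝ} (hρ : |ρ| < 1)
    (p : EuclideanSpace ℝ (Fin n) × EuclideanSpace ℝ (Fin n)) :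
    HasDerivAt (fun r => Fk n A r p) (Fk' n A ρ p) ρ := by
  have ht : 0 < 1 - ρ^2 := one_sub_sq_pos hρ
  have h1 : HasDerivAt (fun x : ℝ => 1 - x^2) (-(2*ρ)) ρ := by
    simpa using (hasDerivAt_pow 2 ρ).const_sub 1
  have h2 := h1.rpow_const (p := -(n:ℝ)/2) (Or.inl ht.ne')
  have h3 : HasDerivAt (fun x : ℝ => 2*Bq p*x - Aq p) (2*Bq p) ρ := by
    simpa using ((hasDerivAt_id ρ).const_mul (2*Bq p)).sub_const (Aq p)
  have h4 : HasDerivAt (fun x : ℝ => 2*(1-x^2)) (2 * -(2*ρ)) ρ := by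
    simpa [mul_comm] using h1.const_mul 2
  have h5 := (h3.div h4 (by positivity))
  have h6 := h5.exp
  exact ((h2.mul h6).const_mul (Ind A p * (2*π) ^ (-(n:ℝ))))

lemma meas_ind {A : Set (EuclideanSpace ℝ (Fin n))} (hA : MeasurableSet A) :
    Measurable (ind A) := measurable_const.indicator hA

lemma meas_Ind {A : Set (EuclideanSpace ℝ (Fin n))} (hA : MeasurableSet A) :
    Measurable (Ind A) :=
  ((meas_ind hA).comp measurable_fst).mul ((meas_ind hA).comp measurable_snd)

lemma aesm_Fk {A : Set (EuclideanSpace ℝ (Fin n))} (hA : MeasurableSet A) (ρ : ℝ) :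
    AEStronglyMeasurable (Fk n A ρ) (volume.prod volume) := by
  have hc : Continuous (fun p : EuclideanSpace ℝ (Fin n) × EuclideanSpace ℝ (Fin n) =>
      (1 - ρ^2) ^ (-(n:ℝ)/2) * Real.exp ((2*Bq p*ρ - Aq p)/(2*(1-ρ^2)))) := by
    have h1 := cont_Bq (n := n)
    have h2 := cont_Aq (n := n)
    fun_prop
  exact (((meas_Ind hA).mul measurable_const).mul hc.measurable).aestronglyMeasurable

lemma aesm_Fk' {A : Set (EuclideanSpace ℝ (Fin n))} (hA : MeasurableSet A) (ρ : ℝ) :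
    AEStronglyMeasurable (Fk' n A ρ) (volume.prod volume) := by
  have h1 := cont_Bq (n := n)
  have h2 := cont_Aq (n := n)
  have hc : Continuous (fun p : EuclideanSpace ℝ (Fin n) × EuclideanSpace ℝ (Fin n) =>
     (-(2*ρ) * (-(n:ℝ)/2) * (1-ρ^2) ^ (-(n:ℝ)/2 - 1)) * Real.exp ((2*Bq p*ρ - Aq p)/(2*(1-ρ^2))) +
     (1-ρ^2) ^ (-(n:ℝ)/2) *
       (Real.exp ((2*Bq p*ρ - Aq p)/(2*(1-ρ^2))) *
         ((2*Bq p * (2*(1-ρ^2)) - (2*Bq p*ρ - Aq p) * (2 * -(2*ρ))) / (2*(1-ρ^2))^2))) := by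
    fun_prop
  exact (((meas_Ind hA).mul measurable_const).mul hc.measurable).aestronglyMeasurable

lemma integrable_Fk {A : Set (EuclideanSpace ℝ (Fin n))} (hA : MeasurableSet A) {ρ : ℝ}
    (hρ : |ρ| ≤ 1/2) : Integrable (Fk n A ρ) (volume.prod volume) := by
  apply Integrable.mono' (((integrable_expAq (n := n) (by norm_num : (0:ℝ) < 1/4)).const_mul
    ((2*π) ^ (-(n:ℝ)) * 2^(n+1)))) (aesm_Fk hA ρ)
  filter_upwards with p
  have := abs_Fk_le (A := A) hρ p
  rw [Real.norm_eq_abs]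
  calc |Fk n A ρ p| ≤ (2*π) ^ (-(n:ℝ)) * (2^(n+1) * Real.exp (-Aq p/4)) := this
  _ = (2*π) ^ (-(n:ℝ)) * 2^(n+1) * Real.exp (-(1/4) * Aq p) := by rw [mul_assoc]; ring_nf

lemma hasDeriv_int_Fk {A : Set (EuclideanSpace ℝ (Fin n))} (hA : MeasurableSet A) :
    HasDerivAt (fun ρ => ∫ p, Fk n A ρ p ∂(volume.prod volume))
      (∫ p, Fk' n A 0 p ∂(volume.prod volume)) 0 := by
  have h := hasDerivAt_integral_of_dominated_loc_of_deriv_le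
    (μ := (volume.prod volume : Measure (EuclideanSpace ℝ (Fin n) × EuclideanSpace ℝ (Fin n))))
    (F := fun ρ p => Fk n A ρ p) (F' := fun ρ p => Fk' n A ρ p) (x₀ := (0:ℝ))
    (bound := boundF n) (s := Metric.ball 0 (1/2)) (Metric.ball_mem_nhds _ (by norm_num))
    (Filter.Eventually.of_forall fun ρ => aesm_Fk hA ρ)
    (integrable_Fk hA (by norm_num))
    (aesm_Fk' hA 0)
    (Filter.Eventually.of_forall fun p => ?_)
    integrable_boundF
    (Filter.Eventually.of_forall fun p => ?_)
  · exact h.2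
  · intro ρ hρ
    rw [Metric.mem_ball, Real.dist_eq, sub_zero] at hρ
    rw [Real.norm_eq_abs]
    exact abs_Fk'_le (le_of_lt hρ) p
  · intro ρ hρ
    rw [Metric.mem_ball, Real.dist_eq, sub_zero] at hρ
    exact hasDerivAt_Fk (by linarith) p

lemma Fk'_zero {A : Set (EuclideanSpace ℝ (Fin n))}
    (p : EuclideanSpace ℝ (Fin n) × EuclideanSpace ℝ (Fin n)) :
    Fk' n A 0 p = Ind A p * (2*π) ^ (-(n:ℝ)) * (Real.exp (-Aq p/2) * Bq p) := by
  unfold Fk'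
  norm_num
  ring_nf
  exact Or.inl trivial

lemma abs_coord_le_norm (x : EuclideanSpace ℝ (Fin n)) (i : Fin n) : |x i| ≤ ‖x‖ := by
  rw [EuclideanSpace.norm_eq, ← Real.sqrt_sq_eq_abs]
  apply Real.sqrt_le_sqrt
  have : (x i)^2 = ‖x i‖^2 := by rw [Real.norm_eq_abs, sq_abs]
  rw [this]
  exact Finset.single_le_sum (f := fun j => ‖x j‖^2) (fun j _ => by positivity) (Finset.mem_univ i)

lemma norm_le_exp (t : ℝ) (ht : 0 ≤ t) : t ≤ Real.exp (t^2/4) := by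
  have h := Real.add_one_le_exp (t^2/4)
  nlinarith [sq_nonneg (t - 2)]

lemma w_norm_le (x : EuclideanSpace ℝ (Fin n)) :
    w n x * ‖x‖ ≤ (2 * Real.pi) ^ (-(n:ℝ)/2) * Real.exp (-(1/4) * ‖x‖^2) := by
  unfold w
  rw [mul_assoc]
  apply mul_le_mul_of_nonneg_left _ (Real.rpow_nonneg (by positivity) _)
  have h := norm_le_exp ‖x‖ (norm_nonneg x)
  calc Real.exp (-‖x‖^2/2) * ‖x‖ ≤ Real.exp (-‖x‖^2/2) * Real.exp (‖x‖^2/4) :=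
    mul_le_mul_of_nonneg_left h (Real.exp_pos _).le
  _ = Real.exp (-(1/4) * ‖x‖^2) := by rw [← Real.exp_add]; ring_nf

lemma cont_coord (i : Fin n) : Continuous (fun x : EuclideanSpace ℝ (Fin n) => x i) :=
  (EuclideanSpace.proj (𝕜 := ℝ) i).continuous

lemma integrable_fi {A : Set (EuclideanSpace ℝ (Fin n))} (hA : MeasurableSet A) (i : Fin n) :
    Integrable (fun x : EuclideanSpace ℝ (Fin n) => ind A x * w n x * x i) volume := by
  apply Integrable.mono' ((integrable_gaussE (n := n) (by norm_num : (0:ℝ) < 1/4)).const_mul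
    ((2 * Real.pi) ^ (-(n:ℝ)/2)))
  · exact (((meas_ind hA).mul w_cont.measurable).mul (cont_coord i).measurable).aestronglyMeasurable
  · filter_upwards with x
    rw [Real.norm_eq_abs, abs_mul, abs_mul, abs_of_nonneg (ind_nonneg x),
      abs_of_pos (w_pos x)]
    calc ind A x * w n x * |x i| ≤ 1 * w n x * ‖x‖ := by
          apply mul_le_mul _ (abs_coord_le_norm x i) (abs_nonneg _)
          · rw [one_mul]; exact (w_pos x).le
          · exact mul_le_mul_of_nonneg_right (ind_le_one x) (w_pos x).le
    _ = w n x * ‖x‖ := by ring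
    _ ≤ (2 * Real.pi) ^ (-(n:ℝ)/2) * Real.exp (-(1/4) * ‖x‖^2) := w_norm_le x

lemma integrable_Vec {A : Set (EuclideanSpace ℝ (Fin n))} (hA : MeasurableSet A) :
    Integrable (fun x : EuclideanSpace ℝ (Fin n) => (ind A x * w n x) • x) volume := by
  apply Integrable.mono' ((integrable_gaussE (n := n) (by norm_num : (0:ℝ) < 1/4)).const_mul
    ((2 * Real.pi) ^ (-(n:ℝ)/2)))
  · exact (((meas_ind hA).mul w_cont.measurable).aemeasurable.aestronglyMeasurable.smul
      aestronglyMeasurable_id)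
  · filter_upwards with x
    rw [norm_smul, Real.norm_eq_abs, abs_mul, abs_of_nonneg (ind_nonneg x), abs_of_pos (w_pos x)]
    calc ind A x * w n x * ‖x‖ ≤ 1 * w n x * ‖x‖ := by
          apply mul_le_mul_of_nonneg_right _ (norm_nonneg x)
          exact mul_le_mul_of_nonneg_right (ind_le_one x) (w_pos x).le
    _ = w n x * ‖x‖ := by ring
    _ ≤ (2 * Real.pi) ^ (-(n:ℝ)/2) * Real.exp (-(1/4) * ‖x‖^2) := w_norm_le x

lemma stepC {A : Set (EuclideanSpace ℝ (Fin n))} (hA : MeasurableSet A) :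
    ∫ p, Fk' n A 0 p ∂(volume.prod volume) = ‖∫ x in A, x ∂(gauss n)‖^2 := by
  set m := ∫ x in A, x ∂(gauss n) with hmdef
  have hm : m = ∫ x, (ind A x * w n x) • x := by
    rw [hmdef, setIntegral_gauss (fun x => x) hA, ← integral_indicator hA]
    congr 1; ext x
    unfold ind
    by_cases h : x ∈ A <;> simp [Set.indicator_apply, h]
  have hmi : ∀ i, m i = ∫ x, ind A x * w n x * x i := by
    intro i
    rw [hm, show (∫ x, (ind A x * w n x) • x) i
        = (EuclideanSpace.proj (𝕜 := ℝ) i) (∫ x, (ind A x * w n x) • x) from rfl,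
      ← ContinuousLinearMap.integral_comp_comm _ (integrable_Vec hA)]
    congr 1
  have hnorm : ‖m‖^2 = ∑ i, (m i)^2 := by
    rw [EuclideanSpace.norm_eq, Real.sq_sqrt (by positivity)]
    congr 1; ext i; rw [Real.norm_eq_abs, sq_abs]
  have hc : ((2*Real.pi) ^ (-(n:ℝ)/2)) * ((2*Real.pi) ^ (-(n:ℝ)/2)) = (2*Real.pi)^(-(n:ℝ)) := by
    rw [← Real.rpow_add (by positivity)]; ring_nf
  have hpt : ∀ p, Fk' n A 0 p
      = ∑ i, (ind A p.1 * w n p.1 * p.1 i) * (ind A p.2 * w n p.2 * p.2 i) := by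
    intro p
    have he : Real.exp (-Aq p/2) = Real.exp (-‖p.1‖^2/2) * Real.exp (-‖p.2‖^2/2) := by
      rw [← Real.exp_add]; unfold Aq; ring_nf
    have hBq : Bq p = ∑ i, p.1 i * p.2 i := by
      unfold Bq; simp [PiLp.inner_apply, RCLike.inner_apply, conj_trivial]; exact Finset.sum_congr rfl fun _ _ => mul_comm _ _
    rw [Fk'_zero, hBq, ← hc, he]
    unfold Ind w
    rw [Finset.mul_sum, Finset.mul_sum]
    apply Finset.sum_congr rfl
    intro i _
    ring
  calc ∫ p, Fk' n A 0 p ∂(volume.prod volume)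
      = ∫ p : EuclideanSpace ℝ (Fin n) × EuclideanSpace ℝ (Fin n),
          ∑ i, (fun x => ind A x * w n x * x i) p.1 * (fun x => ind A x * w n x * x i) p.2
            ∂(volume.prod volume) := by
        congr 1; ext p; exact hpt p
  _ = ∑ i, ∫ p : EuclideanSpace ℝ (Fin n) × EuclideanSpace ℝ (Fin n),
        (fun x => ind A x * w n x * x i) p.1 * (fun x => ind A x * w n x * x i) p.2
          ∂(volume.prod volume) := by
      exact integral_finset_sum _ (fun i _ => (integrable_fi hA i).mul_prod (integrable_fi hA i))
  _ = ∑ i, (∫ x, ind A x * w n x * x i) * (∫ x, ind A x * w n x * x i) := by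
      apply Finset.sum_congr rfl
      intro i _
      exact integral_prod_mul (μ := volume) (ν := volume)
        (fun x => ind A x * w n x * x i) (fun x => ind A x * w n x * x i)
  _ = ∑ i, (m i)^2 := by
      apply Finset.sum_congr rfl
      intro i _
      rw [hmi i]; ring
  _ = ‖m‖^2 := hnorm.symm

lemma scalar_id {n : ℕ} {ρ : ℝ} (ht0 : 0 < 1 - ρ^2) (A : Set (EuclideanSpace ℝ (Fin n)))
    (x z : EuclideanSpace ℝ (Fin n)) :
    (w n x * ind A x * ((Real.sqrt (1-ρ^2) ^ n)⁻¹)) *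
      (ind A z * ((2*Real.pi) ^ (-(n:ℝ)/2) * Real.exp (-‖z - ρ • x‖^2/(2*(1-ρ^2)))))
    = Fk n A ρ (x, z) := by
  have hc : ((2*Real.pi) ^ (-(n:ℝ)/2)) * ((2*Real.pi) ^ (-(n:ℝ)/2)) = (2*Real.pi)^(-(n:ℝ)) := by
    rw [← Real.rpow_add (by positivity)]; ring_nf
  have hsn : ((Real.sqrt (1-ρ^2))^n)⁻¹ = (1-ρ^2) ^ (-(n:ℝ)/2) := by
    have h1 : (Real.sqrt (1-ρ^2))^n = (1-ρ^2) ^ ((n:ℝ)/2) := by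
      rw [← Real.rpow_natCast (Real.sqrt (1-ρ^2)) n, Real.sqrt_eq_rpow,
        ← Real.rpow_mul ht0.le]
      congr 1
      ring
    rw [h1, ← Real.rpow_neg ht0.le, neg_div]
  have e2 : -‖x‖^2/2 + -‖z - ρ•x‖^2/(2*(1-ρ^2))
      = (2*(@inner ℝ _ _ x z)*ρ - (‖x‖^2+‖z‖^2))/(2*(1-ρ^2)) := by
    have hz : ‖z - ρ•x‖^2 = ‖z‖^2 - 2*(ρ*(@inner ℝ _ _ z x)) + ρ^2*‖x‖^2 := by
      rw [norm_sub_sq_real, real_inner_smul_right, norm_smul]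
      simp [Real.norm_eq_abs, mul_pow, sq_abs]
    rw [hz, real_inner_comm z x]
    field_simp
    ring
  have e3 : Real.exp ((2*(@inner ℝ _ _ x z)*ρ - (‖x‖^2+‖z‖^2))/(2*(1-ρ^2)))
      = Real.exp (-‖x‖^2/2) * Real.exp (-‖z - ρ•x‖^2/(2*(1-ρ^2))) := by
    rw [← Real.exp_add, e2]
  show ((2*Real.pi) ^ (-(n:ℝ)/2) * Real.exp (-‖x‖^2/2) * ind A x
        * ((Real.sqrt (1-ρ^2) ^ n)⁻¹)) *
      (ind A z * ((2*Real.pi) ^ (-(n:ℝ)/2) * Real.exp (-‖z - ρ • x‖^2/(2*(1-ρ^2)))))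
    = (ind A x * ind A z * (2*Real.pi) ^ (-(n:ℝ))) *
      ((1-ρ^2) ^ (-(n:ℝ)/2) *
        Real.exp ((2*(@inner ℝ _ _ x z)*ρ - (‖x‖^2+‖z‖^2))/(2*(1-ρ^2))))
  rw [hsn, ← hc, e3]
  ring

lemma stepA {A : Set (EuclideanSpace ℝ (Fin n))} (hA : MeasurableSet A) {ρ : ℝ}
    (hρ : |ρ| < 1/2) :
    ∫ x, ind A x * OU n ρ (ind A) x ∂(gauss n) = ∫ p, Fk n A ρ p ∂(volume.prod volume) := by
  have ht0 : (0:ℝ) < 1 - ρ^2 := one_sub_sq_pos (by linarith [abs_nonneg ρ] : |ρ| < 1)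
  set t := 1 - ρ^2 with htdef
  set s := Real.sqrt t with hsdef
  have hs0 : 0 < s := Real.sqrt_pos.2 ht0
  have hs2 : s^2 = t := Real.sq_sqrt ht0.le
  have hc : ((2*Real.pi) ^ (-(n:ℝ)/2)) * ((2*Real.pi) ^ (-(n:ℝ)/2)) = (2*Real.pi)^(-(n:ℝ)) := by
    rw [← Real.rpow_add (by positivity)]; ring_nf
  -- change of variables for inner integral
  have inner_eq : ∀ x : EuclideanSpace ℝ (Fin n),
      OU n ρ (ind A) x = (s^n)⁻¹ * ∫ z, ind A z *
        ((2*Real.pi) ^ (-(n:ℝ)/2) * Real.exp (-‖z - ρ • x‖^2/(2*t))) := by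
    intro x
    unfold OU
    rw [integral_gauss]
    have hpt : ∀ y : EuclideanSpace ℝ (Fin n),
        w n y • ind A (ρ • x + s • y)
          = (fun z => ind A z * ((2*Real.pi) ^ (-(n:ℝ)/2) * Real.exp (-‖z - ρ • x‖^2/(2*t))))
              (ρ • x + s • y) := by
      intro y
      simp only [smul_eq_mul]
      have h1 : (ρ • x + s • y) - ρ • x = s • y := by abel
      rw [h1, norm_smul, Real.norm_eq_abs, abs_of_pos hs0, mul_pow, hs2]
      have h2 : -(t * ‖y‖^2)/(2*t) = -‖y‖^2/2 := by
        field_simp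
      rw [h2]
      unfold w
      ring
    rw [integral_congr_ae (Filter.Eventually.of_forall hpt)]
    have hcs := Measure.integral_comp_smul (volume : Measure (EuclideanSpace ℝ (Fin n)))
      (fun u => ind A (ρ • x + u) *
        ((2*Real.pi) ^ (-(n:ℝ)/2) * Real.exp (-‖(ρ • x + u) - ρ • x‖^2/(2*t)))) s
    have htr := integral_add_left_eq_self (μ := (volume : Measure (EuclideanSpace ℝ (Fin n))))
      (fun z => ind A z * ((2*Real.pi) ^ (-(n:ℝ)/2) * Real.exp (-‖z - ρ • x‖^2/(2*t)))) (ρ • x)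
    simp only at hcs htr ⊢
    rw [hcs, htr, finrank_euclideanSpace_fin,
      abs_of_pos (by positivity : (0:ℝ) < ((s^n:ℝ))⁻¹), smul_eq_mul]
  rw [integral_gauss]
  have hx : ∀ x, w n x • (ind A x * OU n ρ (ind A) x) = ∫ z, Fk n A ρ (x, z) := by
    intro x
    rw [inner_eq x, smul_eq_mul]
    rw [show w n x * (ind A x * ((s^n)⁻¹ * ∫ z, ind A z *
          ((2*Real.pi) ^ (-(n:ℝ)/2) * Real.exp (-‖z - ρ • x‖^2/(2*t)))))
        = (w n x * ind A x * (s^n)⁻¹) * ∫ z, ind A z *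
          ((2*Real.pi) ^ (-(n:ℝ)/2) * Real.exp (-‖z - ρ • x‖^2/(2*t))) from by ring]
    rw [← integral_const_mul]
    apply integral_congr_ae (Filter.Eventually.of_forall _)
    intro z
    show (w n x * ind A x * (s^n)⁻¹) * (ind A z *
        ((2*Real.pi) ^ (-(n:ℝ)/2) * Real.exp (-‖z - ρ • x‖^2/(2*t)))) = Fk n A ρ (x, z)
    rw [hsdef, htdef]
    exact scalar_id (htdef ▸ ht0) A x z
  rw [integral_congr_ae (Filter.Eventually.of_forall hx)]
  exact integral_integral (integrable_Fk hA hρ.le)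

theorem hasDerivAt_noise_stability_at_zero (n k : ℕ) (hn : 1 ≤ n) (hk : 1 ≤ k)
    (A : Fin k → Set (EuclideanSpace ℝ (Fin n))) (hA : ∀ i, MeasurableSet (A i)) :
    HasDerivAt
      (fun ρ => ∑ i, ∫ x, (A i).indicator 1 x * OU n ρ ((A i).indicator 1) x ∂(gauss n))
      (∑ i, ‖∫ x in A i, x ∂(gauss n)‖ ^ 2) 0 := by
  have key : ∀ B : Set (EuclideanSpace ℝ (Fin n)), MeasurableSet B →
      HasDerivAt (fun ρ => ∫ x, B.indicator 1 x * OU n ρ (B.indicator 1) x ∂(gauss n))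
        (‖∫ x in B, x ∂(gauss n)‖ ^ 2) 0 := by
    intro B hB
    have h := hasDeriv_int_Fk hB
    rw [stepC hB] at h
    apply HasDerivAt.congr_of_eventuallyEq h
    filter_upwards [Metric.ball_mem_nhds (0:ℝ) (by norm_num : (0:ℝ) < 1/2)] with ρ hρ
    rw [Metric.mem_ball, Real.dist_eq, sub_zero] at hρ
    exact stepA hB hρ
  exact HasDerivAt.fun_sum (fun i _ => key (A i) (hA i))
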